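/- Let μ be any probability measure on E_n = {0,1}^n that is invariant under cyclic rotation, i.e. μ(x_0,...,x_{n-1}) = μ(x_1,...,x_{n-1},x_0) for all x ∈ E_n. Then there exist two square complex matrices Q^0 and Q^1 of finite size such that μ(x) = Trace(Q^{x_0}·Q^{x_1}···Q^{x_{n-1}}) for all x ∈ E_n. -/

import Mathlib

open Matrix

open Fin.NatCast Fin.CommRing

namespace TraceRepAux

variable {n : ℕ}

/-- cyclic shift -/
def σ' (y : Fin (n + 1) → Bool) : Fin (n + 1) → Bool := fun i => y (i + 1)

lemma iter_apply (k : ℕ) (y : Fin (n + 1) → Bool) (j : Fin (n + 1)) :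
    (σ'^[k] y) j = y (j + (k : Fin (n + 1))) := by
  induction k generalizing y j with
  | zero => simp
  | succ k ih =>
      rw [Function.iterate_succ_apply']
      show (σ'^[k] y) (j + 1) = _
      rw [ih]
      congr 1
      push_cast
      ring

noncomputable def w (μ : (Fin (n + 1) → Bool) → ℝ) (y : Fin (n + 1) → Bool) : ℂ :=
  ((μ y ^ ((n + 1 : ℝ)⁻¹) : ℝ) : ℂ)

noncomputable def f (μ : (Fin (n + 1) → Bool) → ℝ) (b : Bool)
    (y : Fin (n + 1) → Bool) : ℂ :=
  if y 0 = b then w μ y else 0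

noncomputable def M (μ : (Fin (n + 1) → Bool) → ℝ) (b : Bool) :
    Matrix (Fin (n + 1) → Bool) (Fin (n + 1) → Bool) ℂ :=
  fun y z => if z = σ' y then f μ b y else 0

lemma mul_M (μ : (Fin (n + 1) → Bool) → ℝ) (b : Bool)
    (N : Matrix (Fin (n + 1) → Bool) (Fin (n + 1) → Bool) ℂ)
    (y z : Fin (n + 1) → Bool) :
    (M μ b * N) y z = f μ b y * N (σ' y) z := by
  rw [Matrix.mul_apply]
  rw [Finset.sum_eq_single (σ' y)]
  · simp [M]
  · intro c _ hc
    simp [M, hc]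
  · simp

lemma prod_entry (μ : (Fin (n + 1) → Bool) → ℝ) (L : List Bool)
    (y z : Fin (n + 1) → Bool) :
    ((L.map (M μ)).prod) y z =
      (if z = σ'^[L.length] y then 1 else 0) *
        ∏ i ∈ Finset.range L.length,
          (if (σ'^[i] y) 0 = L.getD i true then w μ (σ'^[i] y) else 0) := by
  induction L generalizing y z with
  | nil =>
      simp only [List.map_nil, List.prod_nil, List.length_nil,
        Function.iterate_zero_apply, Finset.range_zero, Finset.prod_empty, mul_one,
        Matrix.one_apply]
      rcases eq_or_ne z y with h | h
      · subst h; simp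
      · simp [h, Ne.symm h]
  | cons b L ih =>
      rw [List.map_cons, List.prod_cons, mul_M, ih]
      rw [List.length_cons, Finset.prod_range_succ']
      simp only [Function.iterate_succ_apply, List.getD_cons_succ,
        Function.iterate_zero_apply, List.getD_cons_zero]
      unfold f
      simp only [mul_assoc, mul_comm, mul_left_comm]
      congr

end TraceRepAux

open TraceRepAux

/-- Every rotation-invariant probability measure on `{0,1}^n` admits a trace
representation by two finite square complex matrices. -/
theorem exists_trace_representation_of_rotation_invariant (n : ℕ)
    (μ : (Fin (n + 1) → Bool) → ℝ)
    (hpos : ∀ x, 0 ≤ μ x)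
    (hsum : ∑ x : Fin (n + 1) → Bool, μ x = 1)
    (hrot : ∀ x : Fin (n + 1) → Bool, μ x = μ (fun i => x (i + 1))) :
    ∃ (m : ℕ) (Q : Bool → Matrix (Fin m) (Fin m) ℂ),
      ∀ x : Fin (n + 1) → Bool,
        (μ x : ℂ) = Matrix.trace ((List.ofFn fun i => Q (x i)).prod) := by
  classical
  set e : (Fin (n + 1) → Bool) ≃ Fin (Fintype.card (Fin (n + 1) → Bool)) :=
    Fintype.equivFin (Fin (n + 1) → Bool) with he
  refine ⟨Fintype.card (Fin (n + 1) → Bool),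
    fun b => Matrix.reindexAlgEquiv ℂ ℂ e (M μ b), ?_⟩
  intro x
  -- invariance under iterated shift
  have hiter : ∀ (k : ℕ) (y : Fin (n + 1) → Bool), μ (σ'^[k] y) = μ y := by
    intro k
    induction k with
    | zero => intro y; simp
    | succ k ih =>
        intro y
        rw [Function.iterate_succ_apply]
        rw [ih (σ' y)]
        exact (hrot y).symm
  -- move the reindex out of the product
  have hmap : (List.ofFn fun i => Matrix.reindexAlgEquiv ℂ ℂ e (M μ (x i)))
      = ((List.ofFn fun i => M μ (x i)).map (Matrix.reindexAlgEquiv ℂ ℂ e)) := by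
    rw [List.map_ofFn]
    rfl
  rw [hmap, ← map_list_prod (Matrix.reindexAlgEquiv ℂ ℂ e)]
  -- trace of reindexed matrix
  have htr : ∀ A : Matrix (Fin (n + 1) → Bool) (Fin (n + 1) → Bool) ℂ,
      Matrix.trace (Matrix.reindexAlgEquiv ℂ ℂ e A) = Matrix.trace A := by
    intro A
    simp only [Matrix.reindexAlgEquiv_apply, Matrix.reindex_apply, Matrix.trace,
      Matrix.diag, Matrix.submatrix_apply]
    exact Fintype.sum_equiv e.symm _ _ (fun i => rfl)
  rw [htr]
  -- compute the trace of the product of the M's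
  have hofn : (List.ofFn fun i => M μ (x i)) = (List.ofFn x).map (M μ) := by
    rw [List.map_ofFn]; rfl
  rw [hofn]
  rw [Matrix.trace]
  have hlen : (List.ofFn x).length = n + 1 := List.length_ofFn (f := x)
  have hiterid : ∀ y : Fin (n + 1) → Bool, σ'^[n + 1] y = y := by
    intro y
    funext j
    rw [iter_apply]
    congr 1
    simp
  have hentry : ∀ y : Fin (n + 1) → Bool, ((List.ofFn x).map (M μ)).prod y y =
      ∏ i : Fin (n + 1), (if y i = x i then w μ (σ'^[(i : ℕ)] y) else 0) := by
    intro y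
    rw [prod_entry, hlen, hiterid y, if_pos rfl, one_mul]
    rw [← Fin.prod_univ_eq_prod_range]
    refine Finset.prod_congr rfl ?_
    intro i _
    have h1 : (σ'^[(i : ℕ)] y) 0 = y i := by
      rw [iter_apply]
      congr 1
      simp [Fin.cast_val_eq_self]
    have h2 : (List.ofFn x).getD (i : ℕ) true = x i := by
      rw [List.getD_eq_getElem _ _ (by simpa [hlen] using i.isLt)]
      rw [List.getElem_ofFn]
    rw [h1, h2]
  simp only [Matrix.diag]
  refine Eq.symm ?_
  calc (∑ y : Fin (n + 1) → Bool, ((List.ofFn x).map (M μ)).prod y y)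
      = ∑ y : Fin (n + 1) → Bool, ∏ i : Fin (n + 1), (if y i = x i then w μ (σ'^[(i : ℕ)] y) else 0) := by
        exact Finset.sum_congr rfl (fun y _ => hentry y)
    _ = ∏ i : Fin (n + 1), (if x i = x i then w μ (σ'^[(i : ℕ)] x) else 0) := by
        refine Finset.sum_eq_single x (fun y _ hy => ?_) (by simp)
        obtain ⟨j, hj⟩ := Function.ne_iff.mp hy
        exact Finset.prod_eq_zero (Finset.mem_univ j) (if_neg hj)
    _ = ∏ i : Fin (n + 1), w μ x := by
        refine Finset.prod_congr rfl (fun i _ => ?_)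
        rw [if_pos rfl]
        unfold w
        rw [hiter (i : ℕ) x]
    _ = (μ x : ℂ) := by
        rw [Finset.prod_const, Finset.card_univ, Fintype.card_fin]
        unfold w
        rw [← Complex.ofReal_pow]
        congr 1
        rw [← Real.rpow_natCast (μ x ^ ((n + 1 : ℝ)⁻¹)) (n + 1),
          ← Real.rpow_mul (hpos x)]
        have : (n + 1 : ℝ)⁻¹ * ((n + 1 : ℕ) : ℝ) = 1 := by
          push_cast
          field_simp
        rw [this, Real.rpow_one]
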